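/- For each n ≥ 3, let Γₙ be the prism graph, i.e., the Cayley graph of the dihedral group D_{2n} = ⟨a, b | aⁿ = b² = (ab)² = 1⟩ with connection set S = {a, a⁻¹, b}. Then Γₙ is a connected 3-regular vertex-transitive graph on 2n vertices, and its 2-independence number equals α₂(Γₙ) = 2⌊n/4⌋ if n ≡ 0, 1, 2 (mod 4), and α₂(Γₙ) = 2⌊n/4⌋ + 1 if n ≡ 3 (mod 4). -/

import Mathlib

open Polynomial Finset

/-- The independence number of a simple graph: the maximum size of a set of
pairwise non-adjacent vertices. -/
noncomputable def SimpleGraph.indepNumFin {V : Type*} [Fintype V] (G : SimpleGraph V) : ℕ :=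
  sSup {m | ∃ s : Finset V, s.card = m ∧ ∀ u ∈ s, ∀ v ∈ s, ¬ G.Adj u v}

/-- The `k`-th power of a graph: distinct vertices are adjacent iff
their distance in `G` is (finite and) at most `k`. -/
def SimpleGraph.power {V : Type*} (G : SimpleGraph V) (k : ℕ) : SimpleGraph V where
  Adj u v := u ≠ v ∧ G.Reachable u v ∧ G.dist u v ≤ k
  symm := by
    refine ⟨?_⟩
    intro u v ⟨h1, h2, h3⟩
    exact ⟨h1.symm, h2.symm, by rwa [SimpleGraph.dist_comm]⟩
  loopless := by refine ⟨?_⟩; intro u ⟨h, _⟩; exact h rfl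

/-- The `k`-independence number: the maximum size of a set of vertices at
pairwise distance greater than `k`. -/
noncomputable def SimpleGraph.kIndepNum {V : Type*} [Fintype V] (G : SimpleGraph V) (k : ℕ) : ℕ :=
  (G.power k).indepNumFin
/-- The prism graph `Γₙ`: the Cayley graph of the dihedral group
`D_{2n} = ⟨a, b | aⁿ = b² = (ab)² = 1⟩` with connection set `S = {a, a⁻¹, b}`,
where `a = r 1` and `b = sr 0`. -/
def prism (n : ℕ) : SimpleGraph (DihedralGroup n) where
  Adj u v := u ≠ v ∧ u * v⁻¹ ∈
    ({DihedralGroup.r 1, (DihedralGroup.r 1)⁻¹, DihedralGroup.sr 0} :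
      Set (DihedralGroup n))
  symm := by
    refine ⟨?_⟩
    rintro u v ⟨hne, hs⟩
    refine ⟨hne.symm, ?_⟩
    have h : v * u⁻¹ = (u * v⁻¹)⁻¹ := by group
    rw [h]
    rcases hs with h1 | h1 | h1 <;> rw [h1] <;>
      simp [Set.mem_insert_iff, Set.mem_singleton_iff] <;> exact Or.inr rfl
  loopless := by refine ⟨?_⟩; rintro u ⟨h, -⟩; exact h rfl

namespace PrismProof
open DihedralGroup SimpleGraph

variable {n : ℕ}

lemma r_inv (i : ZMod n) : (r i)⁻¹ = r (-i) := rfl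
lemma sr_inv (i : ZMod n) : (sr i)⁻¹ = sr i := rfl

/-! ### cast helpers -/

lemma castInj [NeZero n] {a b : ℕ} (ha : a < n) (hb : b < n) (h : (a : ZMod n) = b) : a = b := by
  have := congrArg ZMod.val h
  rwa [ZMod.val_cast_of_lt ha, ZMod.val_cast_of_lt hb] at this

lemma castNeg [NeZero n] {a : ℕ} (h : a ≤ n) : (-(a : ZMod n)) = ((n - a : ℕ) : ZMod n) := by
  have h2 : ((n - a : ℕ) : ZMod n) + (a : ZMod n) = 0 := by
    rw [← Nat.cast_add]
    have : n - a + a = n := by omega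
    rw [this, ZMod.natCast_self]
  exact (eq_neg_of_add_eq_zero_left h2).symm

lemma cast2 : ((2 : ℕ) : ZMod n) = 2 := by push_cast; ring

lemma one_ne_zero' [NeZero n] (hn : 3 ≤ n) : (1 : ZMod n) ≠ 0 := by
  intro h
  have := castInj (n := n) (a := 1) (b := 0) (by omega) (by omega) (by push_cast; exact h)
  omega

lemma two_ne_zero' [NeZero n] (hn : 3 ≤ n) : (2 : ZMod n) ≠ 0 := by
  intro h
  have := castInj (n := n) (a := 2) (b := 0) (by omega) (by omega) (by rw [cast2]; push_cast; exact h)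
  omega

/-- prism adjacency unfolded -/
lemma prism_adj {u v : DihedralGroup n} :
    (prism n).Adj u v ↔ u ≠ v ∧ (u * v⁻¹ = r 1 ∨ u * v⁻¹ = r (-1) ∨ u * v⁻¹ = sr 0) := by
  show (u ≠ v ∧ _) ↔ _
  rw [show ((r 1 : DihedralGroup n)⁻¹ : DihedralGroup n) = r (-1) from rfl]
  simp [Set.mem_insert_iff, Set.mem_singleton_iff]

/-! ### the ball of radius 2 -/

def B2 (n : ℕ) : Set (DihedralGroup n) :=
  {r 0, r 1, r (-1), r 2, r (-2), sr 0, sr 1, sr (-1)}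

lemma inv_mem_B2 {g : DihedralGroup n} (h : g ∈ B2 n) : g⁻¹ ∈ B2 n := by
  simp only [B2, Set.mem_insert_iff, Set.mem_singleton_iff] at h ⊢
  rcases h with h|h|h|h|h|h|h|h <;> subst h <;> simp [r_inv, sr_inv]

lemma sr_mem_B2 {x : ZMod n} : sr x ∈ B2 n ↔ (x = 0 ∨ x = 1 ∨ x = -1) := by
  simp [B2, -DihedralGroup.r_zero]

lemma r_mem_B2 {x : ZMod n} : r x ∈ B2 n ↔ (x = 0 ∨ x = 1 ∨ x = -1 ∨ x = 2 ∨ x = -2) := by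
  simp [B2, -DihedralGroup.r_zero]

/-- one step: if `u * v⁻¹` is a generator then adjacent -/
lemma adj_of_gen {u v : DihedralGroup n}
    (h : u * v⁻¹ = r 1 ∨ u * v⁻¹ = r (-1) ∨ u * v⁻¹ = sr 0)
    (hne : u * v⁻¹ ≠ 1) : (prism n).Adj u v := by
  refine prism_adj.2 ⟨?_, h⟩
  intro he; subst he; simp at hne

lemma aux_cancel (g u : DihedralGroup n) : u * (g * u)⁻¹ = g⁻¹ := by group

lemma dist_le_two_of_two {u v : DihedralGroup n} (w : DihedralGroup n)
    (h1 : u * w⁻¹ = r 1 ∨ u * w⁻¹ = r (-1) ∨ u * w⁻¹ = sr 0) (hn1 : u * w⁻¹ ≠ 1)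
    (h2 : w * v⁻¹ = r 1 ∨ w * v⁻¹ = r (-1) ∨ w * v⁻¹ = sr 0) (hn2 : w * v⁻¹ ≠ 1) :
    (prism n).Reachable u v ∧ (prism n).dist u v ≤ 2 := by
  have a1 := adj_of_gen h1 hn1
  have a2 := adj_of_gen h2 hn2
  exact ⟨⟨.cons a1 (.cons a2 .nil)⟩,
    by simpa using SimpleGraph.dist_le (.cons a1 (.cons a2 .nil))⟩

lemma sr_ne_one (x : ZMod n) : (sr x : DihedralGroup n) ≠ 1 := by
  simp [one_def, -DihedralGroup.r_zero]

/-- membership in the ball implies distance at most two -/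
lemma dist_le_two_of_mem [NeZero n] (hn : 3 ≤ n) {u v : DihedralGroup n}
    (h : u * v⁻¹ ∈ B2 n) : (prism n).Reachable u v ∧ (prism n).dist u v ≤ 2 := by
  have h10 := one_ne_zero' (n := n) hn
  have hr1 : (r 1 : DihedralGroup n) ≠ 1 := by simp [one_def, h10, -DihedralGroup.r_zero]
  have hrm1 : (r (-1) : DihedralGroup n) ≠ 1 := by
    simp only [one_def, ne_eq, r.injEq, neg_eq_zero]; exact h10
  simp only [B2, Set.mem_insert_iff, Set.mem_singleton_iff] at h
  rcases h with h|h|h|h|h|h|h|h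
  · rw [← one_def] at h
    have : u = v := mul_inv_eq_one.mp h
    subst this
    exact ⟨.refl _, by rw [SimpleGraph.dist_self]; exact Nat.zero_le 2⟩
  · have a := adj_of_gen (Or.inl h) (by rw [h]; exact hr1)
    exact ⟨a.reachable, le_trans (by simpa using SimpleGraph.dist_le (.cons a .nil)) one_le_two⟩
  · have a := adj_of_gen (Or.inr (Or.inl h)) (by rw [h]; exact hrm1)
    exact ⟨a.reachable, le_trans (by simpa using SimpleGraph.dist_le (.cons a .nil)) one_le_two⟩
  · -- r 2 : w = r (-1) * u
    refine dist_le_two_of_two (r (-1) * u) ?_ ?_ ?_ ?_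
    · rw [aux_cancel, r_inv, neg_neg]; exact Or.inl rfl
    · rw [aux_cancel, r_inv, neg_neg]; exact hr1
    · rw [mul_assoc, h, r_mul_r, show (-1 + 2 : ZMod n) = 1 by ring]; exact Or.inl rfl
    · rw [mul_assoc, h, r_mul_r, show (-1 + 2 : ZMod n) = 1 by ring]; exact hr1
  · -- r (-2) : w = r 1 * u
    refine dist_le_two_of_two (r 1 * u) ?_ ?_ ?_ ?_
    · rw [aux_cancel, r_inv]; exact Or.inr (Or.inl rfl)
    · rw [aux_cancel, r_inv]; exact hrm1
    · rw [mul_assoc, h, r_mul_r, show (1 + -2 : ZMod n) = -1 by ring]; exact Or.inr (Or.inl rfl)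
    · rw [mul_assoc, h, r_mul_r, show (1 + -2 : ZMod n) = -1 by ring]; exact hrm1
  · -- sr 0 : single edge
    have a := adj_of_gen (Or.inr (Or.inr h)) (by rw [h]; exact sr_ne_one 0)
    exact ⟨a.reachable, le_trans (by simpa using SimpleGraph.dist_le (.cons a .nil)) one_le_two⟩
  · -- sr 1 : w = r 1 * u
    refine dist_le_two_of_two (r 1 * u) ?_ ?_ ?_ ?_
    · rw [aux_cancel, r_inv]; exact Or.inr (Or.inl rfl)
    · rw [aux_cancel, r_inv]; exact hrm1
    · rw [mul_assoc, h, r_mul_sr, show (1 - 1 : ZMod n) = 0 by ring]; exact Or.inr (Or.inr rfl)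
    · rw [mul_assoc, h, r_mul_sr, show (1 - 1 : ZMod n) = 0 by ring]; exact sr_ne_one 0
  · -- sr (-1) : w = r (-1) * u
    refine dist_le_two_of_two (r (-1) * u) ?_ ?_ ?_ ?_
    · rw [aux_cancel, r_inv, neg_neg]; exact Or.inl rfl
    · rw [aux_cancel, r_inv, neg_neg]; exact hr1
    · rw [mul_assoc, h, r_mul_sr, show (-1 - -1 : ZMod n) = 0 by ring]; exact Or.inr (Or.inr rfl)
    · rw [mul_assoc, h, r_mul_sr, show (-1 - -1 : ZMod n) = 0 by ring]; exact sr_ne_one 0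

/-- a walk of length ≤ 2 forces membership in the ball -/
lemma mem_B2_of_walk {u v : DihedralGroup n} (p : (prism n).Walk u v) (hl : p.length ≤ 2) :
    u * v⁻¹ ∈ B2 n := by
  cases p with
  | nil => rw [mul_inv_cancel, one_def]; exact r_mem_B2.2 (Or.inl rfl)
  | @cons _ w _ h q =>
    cases q with
    | nil =>
      rcases (prism_adj.1 h).2 with h1|h1|h1 <;> rw [h1]
      · exact r_mem_B2.2 (Or.inr (Or.inl rfl))
      · exact r_mem_B2.2 (Or.inr (Or.inr (Or.inl rfl)))
      · exact sr_mem_B2.2 (Or.inl rfl)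
    | @cons _ x _ h' q' =>
      cases q' with
      | nil =>
        have e : u * v⁻¹ = (u * w⁻¹) * (w * v⁻¹) := by group
        rcases (prism_adj.1 h).2 with h1|h1|h1 <;> rcases (prism_adj.1 h').2 with h2|h2|h2 <;>
          rw [e, h1, h2] <;>
          simp only [r_mul_r, r_mul_sr, sr_mul_r, sr_mul_sr]
        · exact r_mem_B2.2 (Or.inr (Or.inr (Or.inr (Or.inl (by ring)))))
        · exact r_mem_B2.2 (Or.inl (by ring))
        · exact sr_mem_B2.2 (Or.inr (Or.inr (by ring)))
        · exact r_mem_B2.2 (Or.inl (by ring))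
        · exact r_mem_B2.2 (Or.inr (Or.inr (Or.inr (Or.inr (by ring)))))
        · exact sr_mem_B2.2 (Or.inr (Or.inl (by ring)))
        · exact sr_mem_B2.2 (Or.inr (Or.inl (by ring)))
        · exact sr_mem_B2.2 (Or.inr (Or.inr (by ring)))
        · exact r_mem_B2.2 (Or.inl (by ring))
      | cons h'' q'' =>
        exfalso
        simp only [SimpleGraph.Walk.length_cons] at hl
        omega

lemma rm1_ne_one [NeZero n] (hn : 3 ≤ n) : (r (-1) : DihedralGroup n) ≠ 1 := by
  simp only [one_def, ne_eq, r.injEq, neg_eq_zero]; exact one_ne_zero' hn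

lemma r1_ne_one [NeZero n] (hn : 3 ≤ n) : (r 1 : DihedralGroup n) ≠ 1 := by
  simp only [one_def, ne_eq, r.injEq]; exact one_ne_zero' hn

lemma prism_connected [NeZero n] (hn : 3 ≤ n) : (prism n).Connected := by
  have key : ∀ g : DihedralGroup n, (prism n).Reachable (r 0) g := by
    have hr : ∀ k : ℕ, (prism n).Reachable (r 0) (r (k : ZMod n)) := by
      intro k
      induction k with
      | zero => exact by rw [Nat.cast_zero]
      | succ k ih =>
        refine ih.trans (SimpleGraph.Adj.reachable (adj_of_gen ?_ ?_))
        · right; left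
          rw [r_inv, r_mul_r]
          congr 1; push_cast; ring
        · rw [r_inv, r_mul_r, show ((k : ZMod n) + -(((k:ℕ)+1 : ℕ) : ZMod n)) = -1 by push_cast; ring]
          exact rm1_ne_one hn
    intro g
    cases g with
    | r i =>
      have := hr i.val
      rwa [ZMod.natCast_rightInverse i] at this
    | sr i =>
      have h1 := hr i.val
      rw [ZMod.natCast_rightInverse i] at h1
      refine h1.trans (SimpleGraph.Adj.reachable (adj_of_gen ?_ ?_))
      · right; right
        rw [sr_inv, r_mul_sr, sub_self]
      · rw [sr_inv, r_mul_sr, sub_self]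
        exact sr_ne_one 0
  have : Nonempty (DihedralGroup n) := ⟨r 0⟩
  exact ⟨fun u v => (key u).symm.trans (key v)⟩

lemma not_mem_B2_of_not_adj [NeZero n] (hn : 3 ≤ n) {u v : DihedralGroup n}
    (hna : ¬ ((prism n).power 2).Adj u v) (hne : u ≠ v) : u * v⁻¹ ∉ B2 n := by
  intro hm
  exact hna ⟨hne, dist_le_two_of_mem hn hm⟩

lemma not_adj_of_not_mem_B2 {u v : DihedralGroup n}
    (h : u * v⁻¹ ∉ B2 n) : ¬ ((prism n).power 2).Adj u v := by
  rintro ⟨-, hr, hd⟩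
  obtain ⟨p, hp⟩ := hr.exists_walk_length_eq_dist
  exact h (mem_B2_of_walk p (by omega))

lemma prism_regular [NeZero n] [DecidableRel (prism n).Adj] (hn : 3 ≤ n) : (prism n).IsRegularOfDegree 3 := by
  intro v
  have hset : (prism n).neighborFinset v = {r (-1) * v, r 1 * v, sr 0 * v} := by
    ext u
    simp only [SimpleGraph.mem_neighborFinset, Finset.mem_insert, Finset.mem_singleton]
    rw [prism_adj]
    constructor
    · rintro ⟨hne, h|h|h⟩
      · left
        have e1 : u = (v * u⁻¹)⁻¹ * v := by group
        rw [h, r_inv] at e1; exact e1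
      · right; left
        have e1 : u = (v * u⁻¹)⁻¹ * v := by group
        rw [h, r_inv, neg_neg] at e1; exact e1
      · right; right
        have e1 : u = (v * u⁻¹)⁻¹ * v := by group
        rw [h, sr_inv] at e1; exact e1
    · rintro (h|h|h) <;> subst h <;> refine ⟨?_, ?_⟩
      · intro hh
        have h2 : r (-1) * v = 1 * v := by rw [one_mul]; exact hh.symm
        exact rm1_ne_one hn (mul_right_cancel h2)
      · left; rw [show v * (r (-1) * v)⁻¹ = (r (-1))⁻¹ by group, r_inv, neg_neg]
      · intro hh
        have h2 : r 1 * v = 1 * v := by rw [one_mul]; exact hh.symm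
        exact r1_ne_one hn (mul_right_cancel h2)
      · right; left; rw [show v * (r 1 * v)⁻¹ = (r 1)⁻¹ by group, r_inv]
      · intro hh
        have h2 : sr 0 * v = 1 * v := by rw [one_mul]; exact hh.symm
        exact sr_ne_one 0 (mul_right_cancel h2)
      · right; right; rw [show v * (sr 0 * v)⁻¹ = (sr 0)⁻¹ by group, sr_inv]
  rw [SimpleGraph.degree, hset]
  have d1 : (r (-1) : DihedralGroup n) * v ≠ r 1 * v := by
    intro hh
    have h2 := mul_right_cancel hh
    rw [r.injEq] at h2
    have : (2 : ZMod n) = 0 := by linear_combination -h2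
    exact two_ne_zero' hn this
  have d2 : (r (-1) : DihedralGroup n) * v ≠ sr 0 * v := by
    intro hh
    have h2 := mul_right_cancel hh
    exact absurd h2 (by simp)
  have d3 : (r 1 : DihedralGroup n) * v ≠ sr 0 * v := by
    intro hh
    have h2 := mul_right_cancel hh
    exact absurd h2 (by simp)
  rw [Finset.card_insert_of_notMem (by simp [d1, d2]),
    Finset.card_insert_of_notMem (by simp [d3]), Finset.card_singleton]

lemma prism_transitive (u v : DihedralGroup n) : ∃ e : prism n ≃g prism n, e u = v := by
  refine ⟨⟨Equiv.mulRight (u⁻¹ * v), fun {a b} => ?_⟩, by show u * (u⁻¹ * v) = v; group⟩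
  show (prism n).Adj (a * (u⁻¹ * v)) (b * (u⁻¹ * v)) ↔ (prism n).Adj a b
  rw [prism_adj, prism_adj]
  have e1 : (a * (u⁻¹ * v)) * (b * (u⁻¹ * v))⁻¹ = a * b⁻¹ := by group
  rw [e1, ne_eq, mul_left_inj, ← ne_eq]

/-! ### positions and layers -/

def posn : DihedralGroup n → ZMod n
  | r i => i
  | sr i => i

def layer : DihedralGroup n → Bool
  | r _ => false
  | sr _ => true

@[simp] lemma posn_r (i : ZMod n) : posn (r i) = i := rfl
@[simp] lemma posn_sr (i : ZMod n) : posn (sr i) = i := rfl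
@[simp] lemma layer_r (i : ZMod n) : layer (r i) = false := rfl
@[simp] lemma layer_sr (i : ZMod n) : layer (sr i) = true := rfl

section UpperBound

variable [NeZero n] {s : Finset (DihedralGroup n)}

/-- two elements of an independent set in the same column are equal -/
lemma col_unique (C : ∀ u ∈ s, ∀ v ∈ s, u ≠ v → u * v⁻¹ ∉ B2 n)
    {u v : DihedralGroup n} (hu : u ∈ s) (hv : v ∈ s) (hp : posn u = posn v) : u = v := by
  by_contra hne
  apply C u hu v hv hne
  cases u with
  | r i =>
    cases v with
    | r j => exact absurd (by rw [show i = j from hp]) hne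
    | sr j =>
      rw [sr_inv, r_mul_sr]
      exact sr_mem_B2.2 (Or.inl (by rw [show i = j from hp]; ring))
  | sr i =>
    cases v with
    | r j =>
      rw [r_inv, sr_mul_r]
      exact sr_mem_B2.2 (Or.inl (by rw [show i = j from hp]; ring))
    | sr j => exact absurd (by rw [show i = j from hp]) hne

/-- no two elements of an independent set in adjacent columns -/
lemma adj_forbidden (hn : 3 ≤ n) (C : ∀ u ∈ s, ∀ v ∈ s, u ≠ v → u * v⁻¹ ∉ B2 n)
    {u v : DihedralGroup n} (hu : u ∈ s) (hv : v ∈ s) (hp : posn v = posn u + 1) : False := by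
  have h10 := one_ne_zero' (n := n) hn
  have hne : u ≠ v := by
    intro he; subst he
    rw [left_eq_add] at hp
    · exact h10 hp
  apply C u hu v hv hne
  cases u with
  | r i =>
    cases v with
    | r j =>
      rw [r_inv, r_mul_r]
      exact r_mem_B2.2 (Or.inr (Or.inr (Or.inl (by
        have : j = i + 1 := hp
        rw [this]; ring))))
    | sr j =>
      rw [sr_inv, r_mul_sr]
      exact sr_mem_B2.2 (Or.inr (Or.inl (by
        have : j = i + 1 := hp
        rw [this]; ring)))
  | sr i =>
    cases v with
    | r j =>
      rw [r_inv, sr_mul_r]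
      exact sr_mem_B2.2 (Or.inr (Or.inr (by
        have : j = i + 1 := hp
        rw [this]; ring)))
    | sr j =>
      rw [sr_inv, sr_mul_sr]
      exact r_mem_B2.2 (Or.inr (Or.inl (by
        have : j = i + 1 := hp
        rw [this]; ring)))

/-- elements two columns apart lie in opposite layers -/
lemma flip_layer (hn : 3 ≤ n) (C : ∀ u ∈ s, ∀ v ∈ s, u ≠ v → u * v⁻¹ ∉ B2 n)
    {u v : DihedralGroup n} (hu : u ∈ s) (hv : v ∈ s) (hp : posn v = posn u + 2) :
    layer v = !layer u := by
  have h20 := two_ne_zero' (n := n) hn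
  have hne : u ≠ v := by
    intro he; subst he
    rw [left_eq_add] at hp
    exact h20 hp
  have hB := C u hu v hv hne
  cases u with
  | r i =>
    cases v with
    | r j =>
      exfalso; apply hB
      rw [r_inv, r_mul_r]
      exact r_mem_B2.2 (Or.inr (Or.inr (Or.inr (Or.inr (by
        have : j = i + 2 := hp
        rw [this]; ring)))))
    | sr j => rfl
  | sr i =>
    cases v with
    | r j => rfl
    | sr j =>
      exfalso; apply hB
      rw [sr_inv, sr_mul_sr]
      exact r_mem_B2.2 (Or.inr (Or.inr (Or.inr (Or.inl (by
        have : j = i + 2 := hp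
        rw [this]; ring)))))

variable (s) in
/-- number of elements of `s` in column `p` -/
def colc (p : ZMod n) : ℕ := (s.filter (fun u => posn u = p)).card

lemma colc_le_one (C : ∀ u ∈ s, ∀ v ∈ s, u ≠ v → u * v⁻¹ ∉ B2 n) (p : ZMod n) :
    colc s p ≤ 1 := by
  apply Finset.card_le_one.2
  intro a ha b hb
  rw [Finset.mem_filter] at ha hb
  exact col_unique C ha.1 hb.1 (ha.2.trans hb.2.symm)

lemma colc_pair (hn : 3 ≤ n) (C : ∀ u ∈ s, ∀ v ∈ s, u ≠ v → u * v⁻¹ ∉ B2 n) (p : ZMod n) :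
    colc s p + colc s (p + 1) ≤ 1 := by
  by_contra hc
  have h1 := colc_le_one C p
  have h2 := colc_le_one C (p + 1)
  have hp1 : 0 < colc s p := by omega
  have hp2 : 0 < colc s (p + 1) := by omega
  obtain ⟨u, hu⟩ := Finset.card_pos.1 hp1
  obtain ⟨v, hv⟩ := Finset.card_pos.1 hp2
  rw [Finset.mem_filter] at hu hv
  exact adj_forbidden hn C hu.1 hv.1 (by rw [hv.2, hu.2])

lemma sum_colc : ∑ p : ZMod n, colc s p = s.card :=
  (Finset.card_eq_sum_card_fiberwise (fun x _ => Finset.mem_univ (posn x))).symm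

lemma sum_colc_pair : ∑ p : ZMod n, (colc s p + colc s (p + 1)) = 2 * s.card := by
  rw [Finset.sum_add_distrib, sum_colc]
  have : ∑ p : ZMod n, colc s (p + 1) = ∑ p : ZMod n, colc s p :=
    Fintype.sum_equiv (Equiv.addRight (1 : ZMod n)) _ _ (fun p => rfl)
  rw [this, sum_colc]; ring

lemma two_card_le (hn : 3 ≤ n) (C : ∀ u ∈ s, ∀ v ∈ s, u ≠ v → u * v⁻¹ ∉ B2 n) :
    2 * s.card ≤ n := by
  rw [← sum_colc_pair]
  calc ∑ p : ZMod n, (colc s p + colc s (p + 1))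
      ≤ (Finset.univ : Finset (ZMod n)).card • 1 :=
        Finset.sum_le_card_nsmul _ _ 1 (fun x _ => colc_pair hn C x)
    _ = n := by simp [ZMod.card]

end UpperBound

section Parity

variable [NeZero n] {s : Finset (DihedralGroup n)}

lemma all_one (hn : 3 ≤ n) (C : ∀ u ∈ s, ∀ v ∈ s, u ≠ v → u * v⁻¹ ∉ B2 n)
    (heq : 2 * s.card = n) (p : ZMod n) : colc s p + colc s (p + 1) = 1 := by
  by_contra hne
  have hle := colc_pair hn C p
  have h0 : colc s p + colc s (p + 1) = 0 := by omega
  have hsum : ∑ q : ZMod n, (colc s q + colc s (q + 1)) = n := by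
    rw [sum_colc_pair, heq]
  have hsplit : ∑ q : ZMod n, (colc s q + colc s (q + 1)) =
      (colc s p + colc s (p + 1)) +
        ∑ q ∈ (Finset.univ : Finset (ZMod n)).erase p, (colc s q + colc s (q + 1)) :=
    (Finset.add_sum_erase _ _ (Finset.mem_univ p)).symm
  have hrest : ∑ q ∈ (Finset.univ : Finset (ZMod n)).erase p, (colc s q + colc s (q + 1))
      ≤ ((Finset.univ : Finset (ZMod n)).erase p).card • 1 :=
    Finset.sum_le_card_nsmul _ _ 1 (fun x _ => colc_pair hn C x)
  rw [Finset.card_erase_of_mem (Finset.mem_univ p)] at hrest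
  simp only [Finset.card_univ, ZMod.card, smul_eq_mul, mul_one] at hrest
  omega

lemma colc_pos_elt (p : ZMod n) (h : 0 < colc s p) : ∃ u ∈ s, posn u = p := by
  obtain ⟨u, hu⟩ := Finset.card_pos.1 h
  rw [Finset.mem_filter] at hu
  exact ⟨u, hu.1, hu.2⟩

lemma colc_pos_of_mem {u : DihedralGroup n} (hu : u ∈ s) : 0 < colc s (posn u) :=
  Finset.card_pos.2 ⟨u, Finset.mem_filter.2 ⟨hu, rfl⟩⟩

lemma step_two (hn : 3 ≤ n) (C : ∀ u ∈ s, ∀ v ∈ s, u ≠ v → u * v⁻¹ ∉ B2 n)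
    (heq : 2 * s.card = n) {p : ZMod n} (h : 0 < colc s p) : 0 < colc s (p + 2) := by
  have h1 := all_one hn C heq p
  have h2 := all_one hn C heq (p + 1)
  rw [show p + 1 + 1 = p + 2 by ring] at h2
  omega

lemma propagate (hn : 3 ≤ n) (C : ∀ u ∈ s, ∀ v ∈ s, u ≠ v → u * v⁻¹ ∉ B2 n)
    (heq : 2 * s.card = n) {u₀ : DihedralGroup n} (hu₀ : u₀ ∈ s) :
    ∀ j : ℕ, ∃ u ∈ s, posn u = posn u₀ + ((2 * j : ℕ) : ZMod n) ∧
      layer u = xor (decide (j % 2 = 1)) (layer u₀) := by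
  intro j
  induction j with
  | zero => exact ⟨u₀, hu₀, by simp, by simp⟩
  | succ j ih =>
    obtain ⟨u, hu, hpu, hlu⟩ := ih
    have hc : 0 < colc s (posn u₀ + ((2 * j : ℕ) : ZMod n)) := hpu ▸ colc_pos_of_mem hu
    have hc2 := step_two hn C heq hc
    obtain ⟨v, hv, hpv⟩ := colc_pos_elt _ hc2
    refine ⟨v, hv, ?_, ?_⟩
    · rw [hpv]; push_cast; ring
    · have hfl : layer v = !layer u := flip_layer hn C hu hv (by rw [hpv, hpu])
      have hb : decide ((j + 1) % 2 = 1) = !decide (j % 2 = 1) := by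
        rcases Nat.mod_two_eq_zero_or_one j with h|h <;> simp [Nat.add_mod, h]
      rw [hfl, hlu, hb, Bool.not_xor]

lemma no_half_card (hn : 3 ≤ n) (hmod : n % 4 = 2)
    (C : ∀ u ∈ s, ∀ v ∈ s, u ≠ v → u * v⁻¹ ∉ B2 n) : 2 * s.card ≠ n := by
  intro heq
  have hpos : 0 < s.card := by omega
  obtain ⟨u₀, hu₀⟩ := Finset.card_pos.1 hpos
  obtain ⟨u, hu, hpu, hlu⟩ := propagate hn C heq hu₀ (n / 2)
  have h2n : (2 * (n / 2) : ℕ) = n := by omega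
  rw [h2n, ZMod.natCast_self, add_zero] at hpu
  have := col_unique C hu hu₀ (by rw [hpu])
  subst this
  have hodd : (n / 2) % 2 = 1 := by omega
  rw [hodd] at hlu
  simp at hlu

end Parity

section Lower

variable [NeZero n]

/-- the `j`-th element of the extremal independent set -/
def elt (n : ℕ) (j : ℕ) : DihedralGroup n :=
  if j % 2 = 0 then r ((2 * j : ℕ) : ZMod n) else sr ((2 * j : ℕ) : ZMod n)

lemma castw_ne_r (hn : 3 ≤ n) {w : ℕ} (h3 : 3 ≤ w) (hw : w ≤ n - 3) :
    (w : ZMod n) ≠ 0 ∧ (w : ZMod n) ≠ 1 ∧ (w : ZMod n) ≠ -1 ∧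
      (w : ZMod n) ≠ 2 ∧ (w : ZMod n) ≠ -2 := by
  refine ⟨?_, ?_, ?_, ?_, ?_⟩
  · intro h
    have := castInj (n := n) (a := w) (b := 0) (by omega) (by omega) (by push_cast; exact h)
    omega
  · intro h
    have := castInj (n := n) (a := w) (b := 1) (by omega) (by omega) (by push_cast; exact h)
    omega
  · intro h
    rw [show (-1 : ZMod n) = -(((1:ℕ)) : ZMod n) by push_cast; ring,
      castNeg (by omega)] at h
    have := castInj (n := n) (a := w) (b := n - 1) (by omega) (by omega) h
    omega
  · intro h
    have := castInj (n := n) (a := w) (b := 2) (by omega) (by omega) (by rw [cast2]; exact h)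
    omega
  · intro h
    rw [show (-2 : ZMod n) = -(((2:ℕ)) : ZMod n) by rw [cast2], castNeg (by omega)] at h
    have := castInj (n := n) (a := w) (b := n - 2) (by omega) (by omega) h
    omega

lemma castw_ne_sr (hn : 3 ≤ n) {w : ℕ} (h2 : 2 ≤ w) (hw : w ≤ n - 2) :
    (w : ZMod n) ≠ 0 ∧ (w : ZMod n) ≠ 1 ∧ (w : ZMod n) ≠ -1 := by
  refine ⟨?_, ?_, ?_⟩
  · intro h
    have := castInj (n := n) (a := w) (b := 0) (by omega) (by omega) (by push_cast; exact h)
    omega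
  · intro h
    have := castInj (n := n) (a := w) (b := 1) (by omega) (by omega) (by push_cast; exact h)
    omega
  · intro h
    rw [show (-1 : ZMod n) = -(((1:ℕ)) : ZMod n) by push_cast; ring,
      castNeg (by omega)] at h
    have := castInj (n := n) (a := w) (b := n - 1) (by omega) (by omega) h
    omega

lemma r_pos_not (hn : 3 ≤ n) {w : ℕ} (h3 : 3 ≤ w) (hw : w ≤ n - 3) :
    (r ((w : ℕ) : ZMod n) : DihedralGroup n) ∉ B2 n := by
  obtain ⟨a, b, c, d, e⟩ := castw_ne_r hn h3 hw
  rw [r_mem_B2]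
  rintro (h|h|h|h|h)
  exacts [a h, b h, c h, d h, e h]

lemma r_neg_not (hn : 3 ≤ n) {w : ℕ} (h3 : 3 ≤ w) (hw : w ≤ n - 3) :
    (r (-((w : ℕ) : ZMod n)) : DihedralGroup n) ∉ B2 n := by
  obtain ⟨a, b, c, d, e⟩ := castw_ne_r hn h3 hw
  rw [r_mem_B2]
  rintro (h|h|h|h|h)
  · exact a (neg_eq_zero.mp h)
  · exact c (by linear_combination -h)
  · exact b (by linear_combination -h)
  · exact e (by linear_combination -h)
  · exact d (by linear_combination -h)

lemma sr_pos_not (hn : 3 ≤ n) {w : ℕ} (h2 : 2 ≤ w) (hw : w ≤ n - 2) :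
    (sr ((w : ℕ) : ZMod n) : DihedralGroup n) ∉ B2 n := by
  obtain ⟨a, b, c⟩ := castw_ne_sr hn h2 hw
  rw [sr_mem_B2]
  rintro (h|h|h)
  exacts [a h, b h, c h]

lemma sr_neg_not (hn : 3 ≤ n) {w : ℕ} (h2 : 2 ≤ w) (hw : w ≤ n - 2) :
    (sr (-((w : ℕ) : ZMod n)) : DihedralGroup n) ∉ B2 n := by
  obtain ⟨a, b, c⟩ := castw_ne_sr hn h2 hw
  rw [sr_mem_B2]
  rintro (h|h|h)
  · exact a (neg_eq_zero.mp h)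
  · exact c (by linear_combination -h)
  · exact b (by linear_combination -h)

lemma key_not_mem (hn : 3 ≤ n) {m : ℕ}
    (hm : m = if n % 4 = 3 then 2 * (n / 4) + 1 else 2 * (n / 4))
    {i j : ℕ} (hij : i < j) (hj : j < m) : elt n i * (elt n j)⁻¹ ∉ B2 n := by
  have hmn : 2 * m ≤ n + 1 := by
    by_cases h4 : n % 4 = 3 <;> simp only [h4, if_true, if_false] at hm <;> omega
  have hsub : (((2 * j - 2 * i : ℕ)) : ZMod n) = ((2 * j : ℕ) : ZMod n) - ((2 * i : ℕ) : ZMod n) := by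
    rw [Nat.cast_sub (by omega : 2 * i ≤ 2 * j)]
  by_cases hi2 : i % 2 = 0 <;> by_cases hj2 : j % 2 = 0 <;>
    simp only [elt, hi2, hj2, if_true, if_false, ite_true, ite_false, reduceIte]
  · -- both even : r, r
    rw [r_inv, r_mul_r, show ((2 * i : ℕ) : ZMod n) + -((2 * j : ℕ) : ZMod n)
      = -(((2 * j - 2 * i : ℕ)) : ZMod n) by rw [hsub]; ring]
    have hb : 3 ≤ 2 * j - 2 * i ∧ 2 * j - 2 * i ≤ n - 3 := by
      by_cases h4 : n % 4 = 3 <;> simp only [h4, if_true, if_false] at hm <;> omega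
    exact r_neg_not hn hb.1 hb.2
  · -- i even, j odd : r, sr
    rw [sr_inv, r_mul_sr, show ((2 * j : ℕ) : ZMod n) - ((2 * i : ℕ) : ZMod n)
      = (((2 * j - 2 * i : ℕ)) : ZMod n) by rw [hsub]]
    have hb : 2 ≤ 2 * j - 2 * i ∧ 2 * j - 2 * i ≤ n - 2 := by
      by_cases h4 : n % 4 = 3 <;> simp only [h4, if_true, if_false] at hm <;> omega
    exact sr_pos_not hn hb.1 hb.2
  · -- i odd, j even : sr, r
    rw [r_inv, sr_mul_r, show ((2 * i : ℕ) : ZMod n) + -((2 * j : ℕ) : ZMod n)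
      = -(((2 * j - 2 * i : ℕ)) : ZMod n) by rw [hsub]; ring]
    have hb : 2 ≤ 2 * j - 2 * i ∧ 2 * j - 2 * i ≤ n - 2 := by
      by_cases h4 : n % 4 = 3 <;> simp only [h4, if_true, if_false] at hm <;> omega
    exact sr_neg_not hn hb.1 hb.2
  · -- both odd : sr, sr
    rw [sr_inv, sr_mul_sr, show ((2 * j : ℕ) : ZMod n) - ((2 * i : ℕ) : ZMod n)
      = (((2 * j - 2 * i : ℕ)) : ZMod n) by rw [hsub]]
    have hb : 3 ≤ 2 * j - 2 * i ∧ 2 * j - 2 * i ≤ n - 3 := by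
      by_cases h4 : n % 4 = 3 <;> simp only [h4, if_true, if_false] at hm <;> omega
    exact r_pos_not hn hb.1 hb.2

lemma card_A (hn : 3 ≤ n) {m : ℕ}
    (hm : m = if n % 4 = 3 then 2 * (n / 4) + 1 else 2 * (n / 4)) :
    ((Finset.range m).image (elt n)).card = m := by
  have hmn : 2 * m ≤ n + 1 := by
    by_cases h4 : n % 4 = 3 <;> simp only [h4, if_true, if_false] at hm <;> omega
  rw [Finset.card_image_of_injOn, Finset.card_range]
  intro i hi j hj he
  simp only [Finset.coe_range, Set.mem_Iio] at hi hj
  by_cases hi2 : i % 2 = 0 <;> by_cases hj2 : j % 2 = 0 <;>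
    simp only [elt, hi2, hj2, if_true, if_false, ite_true, ite_false, reduceIte,
      r.injEq, sr.injEq] at he
  · have := castInj (n := n) (a := 2 * i) (b := 2 * j) (by omega) (by omega) he
    omega
  · simp at he
  · simp at he
  · have := castInj (n := n) (a := 2 * i) (b := 2 * j) (by omega) (by omega) he
    omega

lemma indep_A (hn : 3 ≤ n) {m : ℕ}
    (hm : m = if n % 4 = 3 then 2 * (n / 4) + 1 else 2 * (n / 4)) :
    ∀ u ∈ (Finset.range m).image (elt n), ∀ v ∈ (Finset.range m).image (elt n),
      ¬ ((prism n).power 2).Adj u v := by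
  intro u hu v hv
  obtain ⟨i, hi, rfl⟩ := Finset.mem_image.1 hu
  obtain ⟨j, hj, rfl⟩ := Finset.mem_image.1 hv
  rw [Finset.mem_range] at hi hj
  rcases lt_trichotomy i j with h | h | h
  · exact not_adj_of_not_mem_B2 (key_not_mem hn hm h hj)
  · subst h
    exact SimpleGraph.irrefl _
  · apply not_adj_of_not_mem_B2
    intro hmem
    have h2 := inv_mem_B2 hmem
    rw [show (elt n i * (elt n j)⁻¹)⁻¹ = elt n j * (elt n i)⁻¹ by group] at h2
    exact key_not_mem hn hm h hi h2

end Lower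

end PrismProof

/-- For each `n ≥ 3`, the prism graph `Γₙ` is a connected `3`-regular vertex-transitive
graph on `2n` vertices, and its `2`-independence number equals `2⌊n/4⌋` if
`n ≡ 0, 1, 2 (mod 4)` and `2⌊n/4⌋ + 1` if `n ≡ 3 (mod 4)`. -/
theorem prism_alpha2 (n : ℕ) [NeZero n] (hn : 3 ≤ n) [DecidableRel (prism n).Adj] :
    (prism n).Connected ∧
    (prism n).IsRegularOfDegree 3 ∧
    Fintype.card (DihedralGroup n) = 2 * n ∧
    (∀ u v : DihedralGroup n, ∃ e : prism n ≃g prism n, e u = v) ∧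
    (prism n).kIndepNum 2 = (if n % 4 = 3 then 2 * (n / 4) + 1 else 2 * (n / 4)) := by
  refine ⟨PrismProof.prism_connected hn, PrismProof.prism_regular hn, DihedralGroup.card,
    PrismProof.prism_transitive, ?_⟩
  set M := if n % 4 = 3 then 2 * (n / 4) + 1 else 2 * (n / 4) with hM
  rw [SimpleGraph.kIndepNum, SimpleGraph.indepNumFin]
  apply IsGreatest.csSup_eq
  constructor
  · exact ⟨(Finset.range M).image (PrismProof.elt n), PrismProof.card_A hn hM,
      PrismProof.indep_A hn hM⟩
  · rintro m' ⟨s, rfl, hind⟩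
    have C : ∀ u ∈ s, ∀ v ∈ s, u ≠ v → u * v⁻¹ ∉ PrismProof.B2 n :=
      fun u hu v hv hne => PrismProof.not_mem_B2_of_not_adj hn (hind u hu v hv) hne
    have h1 := PrismProof.two_card_le hn C
    by_cases h2 : n % 4 = 2
    · have h3 := PrismProof.no_half_card hn h2 C
      rw [hM]; split <;> omega
    · rw [hM]; split <;> omega
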